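/- Let α : Sym⁺(n) → Sym⁺(n) be a function on the cone of symmetric positive definite n×n real matrices such that X⁻¹ # Y = α(X)⁻¹ # α(Y) for all X, Y ∈ Sym⁺(n), where # denotes the matrix geometric mean. Then there exists a positive real number λ such that α(X) = λ X for all X ∈ Sym⁺(n). -/

import Mathlib

open Matrix
open scoped Classical

/-- The unique symmetric positive semidefinite square root of a positive semidefinite
real matrix (junk value `0` for matrices that are not positive semidefinite). -/
noncomputable def msqrt {n : ℕ} (A : Matrix (Fin n) (Fin n) ℝ) :
    Matrix (Fin n) (Fin n) ℝ :=
  if h : A.PosSemidef then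
    (h.1.eigenvectorUnitary : Matrix (Fin n) (Fin n) ℝ) *
      diagonal ((↑) ∘ (Real.sqrt ∘ h.1.eigenvalues)) *
      (star h.1.eigenvectorUnitary : Matrix (Fin n) (Fin n) ℝ)
  else 0

/-- The geometric mean `A # B = A^{1/2} (A^{-1/2} B A^{-1/2})^{1/2} A^{1/2}` of two
symmetric positive definite matrices `A` and `B` (here `A^{-1/2} = (A^{1/2})⁻¹`). -/
noncomputable def gmean {n : ℕ} (A B : Matrix (Fin n) (Fin n) ℝ) :
    Matrix (Fin n) (Fin n) ℝ :=
  msqrt A * msqrt ((msqrt A)⁻¹ * B * (msqrt A)⁻¹) * msqrt A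

namespace Stmt15

variable {n : ℕ}

open scoped MatrixOrder

lemma msqrt_eq_sqrt {A : Matrix (Fin n) (Fin n) ℝ} (hA : A.PosSemidef) :
    msqrt A = CFC.sqrt A := by
  rw [CFC.sqrt_eq_real_sqrt A hA.nonneg, cfcₙ_eq_cfc, hA.1.cfc_eq, msqrt, dif_pos hA]
  simp only [Matrix.IsHermitian.cfc, Unitary.conjStarAlgAut_apply]
  rfl

lemma msqrt_mul_self {A : Matrix (Fin n) (Fin n) ℝ} (hA : A.PosSemidef) :
    msqrt A * msqrt A = A := by
  rw [msqrt_eq_sqrt hA]; exact CFC.sqrt_mul_sqrt_self A hA.nonneg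

lemma msqrt_posSemidef {A : Matrix (Fin n) (Fin n) ℝ} (hA : A.PosSemidef) :
    (msqrt A).PosSemidef := by
  rw [msqrt_eq_sqrt hA]; exact (CFC.sqrt_nonneg A).posSemidef

lemma posDef_of_posSemidef_isUnit {S : Matrix (Fin n) (Fin n) ℝ} (hS : S.PosSemidef)
    (h : IsUnit S.det) : S.PosDef := by
  refine posDef_iff_dotProduct_mulVec.mpr ⟨hS.1, fun x hx => lt_of_le_of_ne (hS.dotProduct_mulVec_nonneg x) fun h0 => hx ?_⟩
  have h1 : S *ᵥ x = 0 := (hS.dotProduct_mulVec_zero_iff x).mp h0.symm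
  have h2 := congrArg (fun v => S⁻¹ *ᵥ v) h1
  simpa [Matrix.mulVec_mulVec, Matrix.nonsing_inv_mul S h] using h2

lemma msqrt_unique {A B : Matrix (Fin n) (Fin n) ℝ} (hB : B.PosSemidef)
    (hAB : B * B = A) : msqrt A = B := by
  have hA : A.PosSemidef := by
    rw [← hAB, ← pow_two]; exact hB.pow 2
  rw [msqrt_eq_sqrt hA]
  exact CFC.sqrt_unique hAB hB.nonneg

lemma msqrt_posDef {A : Matrix (Fin n) (Fin n) ℝ} (hA : A.PosDef) :
    (msqrt A).PosDef := by
  refine posDef_of_posSemidef_isUnit (msqrt_posSemidef hA.posSemidef) ?_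
  have h : msqrt A * msqrt A = A := msqrt_mul_self hA.posSemidef
  have hd : (msqrt A).det * (msqrt A).det = A.det := by
    rw [← Matrix.det_mul, h]
  have := hA.det_pos
  refine isUnit_iff_ne_zero.2 fun h0 => ?_
  rw [h0, mul_zero] at hd; linarith

lemma posDef_mul_mul {A B : Matrix (Fin n) (Fin n) ℝ} (hA : A.PosDef) (hB : B.PosDef) :
    (B * A * B).PosDef := by
  have h1 : (Bᴴ * A * B).PosSemidef := hA.posSemidef.conjTranspose_mul_mul_same B
  rw [hB.1] at h1
  refine posDef_of_posSemidef_isUnit h1 ?_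
  have hd : (B * A * B).det = B.det * A.det * B.det := by
    rw [Matrix.det_mul, Matrix.det_mul]
  refine isUnit_iff_ne_zero.2 fun h0 => ?_
  rw [h0] at hd
  have h2 := hA.det_pos; have h3 := hB.det_pos
  have h4 := mul_pos (mul_pos h3 h2) h3
  linarith

lemma msqrt_one : msqrt (1 : Matrix (Fin n) (Fin n) ℝ) = 1 :=
  msqrt_unique Matrix.PosSemidef.one (Matrix.one_mul 1)

lemma msqrt_inv {A : Matrix (Fin n) (Fin n) ℝ} (hA : A.PosDef) :
    msqrt A⁻¹ = (msqrt A)⁻¹ := by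
  refine msqrt_unique ((msqrt_posDef hA).inv).posSemidef ?_
  rw [← Matrix.mul_inv_rev, msqrt_mul_self hA.posSemidef]

lemma gmean_riccati {X Y : Matrix (Fin n) (Fin n) ℝ} (hX : X.PosDef) (hY : Y.PosDef) :
    (gmean X⁻¹ Y).PosDef ∧ gmean X⁻¹ Y * X * gmean X⁻¹ Y = Y := by
  have hXi : (X⁻¹).PosDef := hX.inv
  set S := msqrt X⁻¹ with hSdef
  have hS : S.PosDef := msqrt_posDef hXi
  have hSS : S * S = X⁻¹ := msqrt_mul_self hXi.posSemidef
  have hSdet : IsUnit S.det := isUnit_iff_ne_zero.2 (ne_of_gt hS.det_pos)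
  have hS1 : S * S⁻¹ = 1 := Matrix.mul_nonsing_inv S hSdet
  have hS2 : S⁻¹ * S = 1 := Matrix.nonsing_inv_mul S hSdet
  have hT : (S⁻¹ * Y * S⁻¹).PosDef := posDef_mul_mul hY hS.inv
  set T := msqrt (S⁻¹ * Y * S⁻¹) with hTdef
  have hTpd : T.PosDef := msqrt_posDef hT
  have hTT : T * T = S⁻¹ * Y * S⁻¹ := msqrt_mul_self hT.posSemidef
  have hg : gmean X⁻¹ Y = S * T * S := rfl
  have hXval : X = S⁻¹ * S⁻¹ := by
    rw [← Matrix.mul_inv_rev, hSS, Matrix.nonsing_inv_nonsing_inv X (isUnit_iff_ne_zero.2 (ne_of_gt hX.det_pos))]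
  constructor
  · rw [hg]; exact posDef_mul_mul hTpd hS
  · rw [hg, hXval]
    have e1 : ∀ C : Matrix (Fin n) (Fin n) ℝ, S * (S⁻¹ * C) = C := fun C => by
      rw [← Matrix.mul_assoc, hS1, Matrix.one_mul]
    have e2 : ∀ C : Matrix (Fin n) (Fin n) ℝ, S⁻¹ * (S * C) = C := fun C => by
      rw [← Matrix.mul_assoc, hS2, Matrix.one_mul]
    calc S * T * S * (S⁻¹ * S⁻¹) * (S * T * S)
        = S * (T * (S * (S⁻¹ * (S⁻¹ * (S * (T * S)))))) := by
          simp only [Matrix.mul_assoc]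
      _ = S * (T * (T * S)) := by rw [e1, e2]
      _ = S * (S⁻¹ * (Y * (S⁻¹ * S))) := by
          rw [← Matrix.mul_assoc T T S, hTT]; simp only [Matrix.mul_assoc]
      _ = Y := by rw [e1, hS2, Matrix.mul_one]

lemma riccati_unique {X Z Z' : Matrix (Fin n) (Fin n) ℝ} (hX : X.PosDef)
    (hZ : Z.PosDef) (hZ' : Z'.PosDef) (h : Z * X * Z = Z' * X * Z') : Z = Z' := by
  set R := msqrt X with hRdef
  have hR : R.PosDef := msqrt_posDef hX
  have hRR : R * R = X := msqrt_mul_self hX.posSemidef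
  have hRdet : IsUnit R.det := isUnit_iff_ne_zero.2 (ne_of_gt hR.det_pos)
  have hR1 : R * R⁻¹ = 1 := Matrix.mul_nonsing_inv R hRdet
  have hR2 : R⁻¹ * R = 1 := Matrix.nonsing_inv_mul R hRdet
  have sq : ∀ W : Matrix (Fin n) (Fin n) ℝ, (R * W * R) ^ 2 = R * (W * X * W) * R := by
    intro W
    rw [pow_two]
    calc R * W * R * (R * W * R) = R * W * (R * R) * W * R := by
          simp only [Matrix.mul_assoc]
      _ = R * (W * X * W) * R := by rw [hRR]; simp only [Matrix.mul_assoc]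
  have e : R * Z * R = R * Z' * R :=
    (CFC.sq_eq_sq_iff _ _ (posDef_mul_mul hZ hR).posSemidef.nonneg
      (posDef_mul_mul hZ' hR).posSemidef.nonneg).1
      (by rw [sq, sq, h])
  have e2 := congrArg (fun M => R⁻¹ * M * R⁻¹) e
  simpa only [Matrix.mul_assoc, ← Matrix.mul_assoc R⁻¹ R, hR2, Matrix.one_mul,
    hR1, Matrix.mul_one] using e2



/-- Embedding of a 2×2 matrix into the (i,j) plane of an n×n matrix. -/
def Emb {n : ℕ} (i j : Fin n) (B : Matrix (Fin 2) (Fin 2) ℝ) : Matrix (Fin n) (Fin n) ℝ :=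
  Matrix.of fun k l =>
    if k = i then (if l = i then B 0 0 else if l = j then B 0 1 else 0)
    else if k = j then (if l = i then B 1 0 else if l = j then B 1 1 else 0)
    else if k = l then 1 else 0

variable {n : ℕ} {i j : Fin n}

lemma Emb_ii (B : Matrix (Fin 2) (Fin 2) ℝ) : Emb i j B i i = B 0 0 := by
  simp [Emb]

lemma Emb_ij (hij : i ≠ j) (B : Matrix (Fin 2) (Fin 2) ℝ) : Emb i j B i j = B 0 1 := by
  simp [Emb, hij.symm]

lemma Emb_ji (hij : i ≠ j) (B : Matrix (Fin 2) (Fin 2) ℝ) : Emb i j B j i = B 1 0 := by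
  simp [Emb, hij, hij.symm]

lemma Emb_jj (hij : i ≠ j) (B : Matrix (Fin 2) (Fin 2) ℝ) : Emb i j B j j = B 1 1 := by
  simp [Emb, hij, hij.symm]

lemma Emb_i_out (B : Matrix (Fin 2) (Fin 2) ℝ) {l : Fin n} (h1 : l ≠ i) (h2 : l ≠ j) :
    Emb i j B i l = 0 := by
  simp [Emb, h1, h2]

lemma Emb_j_out (hij : i ≠ j) (B : Matrix (Fin 2) (Fin 2) ℝ) {l : Fin n}
    (h1 : l ≠ i) (h2 : l ≠ j) : Emb i j B j l = 0 := by
  simp [Emb, hij.symm, h1, h2]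

lemma Emb_out (B : Matrix (Fin 2) (Fin 2) ℝ) {k : Fin n} (h1 : k ≠ i) (h2 : k ≠ j)
    (l : Fin n) : Emb i j B k l = if k = l then 1 else 0 := by
  simp [Emb, h1, h2]

lemma sum_pair_support (hij : i ≠ j) (f : Fin n → ℝ)
    (hf : ∀ m, m ≠ i → m ≠ j → f m = 0) : ∑ m, f m = f i + f j := by
  rw [← Finset.sum_subset (Finset.subset_univ ({i, j} : Finset (Fin n)))
    (fun x _ hx => by
      simp only [Finset.mem_insert, Finset.mem_singleton, not_or] at hx
      exact hf x hx.1 hx.2)]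
  exact Finset.sum_pair hij

lemma Emb_mul_left (hij : i ≠ j) (B : Matrix (Fin 2) (Fin 2) ℝ)
    (A : Matrix (Fin n) (Fin n) ℝ) (q : Fin n) :
    (Emb i j B * A) i q = B 0 0 * A i q + B 0 1 * A j q := by
  rw [Matrix.mul_apply, sum_pair_support hij _
    (fun m h1 h2 => by rw [Emb_i_out B h1 h2, zero_mul])]
  rw [Emb_ii, Emb_ij hij]

lemma Emb_mul_left' (hij : i ≠ j) (B : Matrix (Fin 2) (Fin 2) ℝ)
    (A : Matrix (Fin n) (Fin n) ℝ) (q : Fin n) :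
    (Emb i j B * A) j q = B 1 0 * A i q + B 1 1 * A j q := by
  rw [Matrix.mul_apply, sum_pair_support hij _
    (fun m h1 h2 => by rw [Emb_j_out hij B h1 h2, zero_mul])]
  rw [Emb_ji hij, Emb_jj hij]

lemma Emb_mul_right (hij : i ≠ j) (C : Matrix (Fin 2) (Fin 2) ℝ)
    (A : Matrix (Fin n) (Fin n) ℝ) (q : Fin n) :
    (A * Emb i j C) q i = A q i * C 0 0 + A q j * C 1 0 := by
  rw [Matrix.mul_apply, sum_pair_support hij _ (fun m h1 h2 => by
    rw [Emb_out C h1 h2, if_neg h1, mul_zero])]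
  rw [Emb_ii, Emb_ji hij]

lemma Emb_mul_right' (hij : i ≠ j) (C : Matrix (Fin 2) (Fin 2) ℝ)
    (A : Matrix (Fin n) (Fin n) ℝ) (q : Fin n) :
    (A * Emb i j C) q j = A q i * C 0 1 + A q j * C 1 1 := by
  rw [Matrix.mul_apply, sum_pair_support hij _ (fun m h1 h2 => by
    rw [Emb_out C h1 h2, if_neg h2, mul_zero])]
  rw [Emb_ij hij, Emb_jj hij]

lemma Emb_mul_left_out (B : Matrix (Fin 2) (Fin 2) ℝ) (A : Matrix (Fin n) (Fin n) ℝ)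
    {k : Fin n} (h1 : k ≠ i) (h2 : k ≠ j) (q : Fin n) : (Emb i j B * A) k q = A k q := by
  rw [Matrix.mul_apply]
  rw [Finset.sum_eq_single_of_mem k (Finset.mem_univ k)
    (fun m _ hm => by rw [Emb_out B h1 h2, if_neg (fun h => hm h.symm), zero_mul])]
  rw [Emb_out B h1 h2, if_pos rfl, one_mul]

lemma Emb_col_out (hij : i ≠ j) (C : Matrix (Fin 2) (Fin 2) ℝ) {l : Fin n}
    (h1 : l ≠ i) (h2 : l ≠ j) {m : Fin n} (hm : m ≠ l) : Emb i j C m l = 0 := by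
  by_cases hmi : m = i
  · subst hmi; exact Emb_i_out C h1 h2
  · by_cases hmj : m = j
    · subst hmj; exact Emb_j_out hij C h1 h2
    · rw [Emb_out C hmi hmj, if_neg hm]

lemma Emb_mul_right_out (hij : i ≠ j) (C : Matrix (Fin 2) (Fin 2) ℝ)
    (A : Matrix (Fin n) (Fin n) ℝ) {l : Fin n} (h1 : l ≠ i) (h2 : l ≠ j) (q : Fin n) :
    (A * Emb i j C) q l = A q l := by
  rw [Matrix.mul_apply]
  rw [Finset.sum_eq_single_of_mem l (Finset.mem_univ l)
    (fun m _ hm => by rw [Emb_col_out hij C h1 h2 hm, mul_zero])]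
  rw [Emb_out C h1 h2, if_pos rfl, mul_one]

lemma Emb_mul (hij : i ≠ j) (B C : Matrix (Fin 2) (Fin 2) ℝ) :
    Emb i j B * Emb i j C = Emb i j (B * C) := by
  ext k l
  by_cases hk1 : k = i
  · rw [hk1, Emb_mul_left hij]
    by_cases hl1 : l = i
    · rw [hl1, Emb_ii, Emb_ji hij, Emb_ii, Matrix.mul_apply, Fin.sum_univ_two]
    · by_cases hl2 : l = j
      · rw [hl2, Emb_ij hij, Emb_jj hij, Emb_ij hij, Matrix.mul_apply, Fin.sum_univ_two]
      · rw [Emb_i_out _ hl1 hl2, Emb_j_out hij _ hl1 hl2, Emb_i_out _ hl1 hl2]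
        ring
  · by_cases hk2 : k = j
    · rw [hk2, Emb_mul_left' hij]
      by_cases hl1 : l = i
      · rw [hl1, Emb_ii, Emb_ji hij, Emb_ji hij, Matrix.mul_apply, Fin.sum_univ_two]
      · by_cases hl2 : l = j
        · rw [hl2, Emb_ij hij, Emb_jj hij, Emb_jj hij, Matrix.mul_apply, Fin.sum_univ_two]
        · rw [Emb_i_out _ hl1 hl2, Emb_j_out hij _ hl1 hl2, Emb_j_out hij _ hl1 hl2]
          ring
    · rw [Emb_mul_left_out _ _ hk1 hk2, Emb_out _ hk1 hk2, Emb_out _ hk1 hk2]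

lemma Emb_transpose (hij : i ≠ j) (B : Matrix (Fin 2) (Fin 2) ℝ) :
    (Emb i j B)ᵀ = Emb i j Bᵀ := by
  ext k l
  rw [Matrix.transpose_apply]
  by_cases hk1 : k = i
  · rw [hk1]
    by_cases hl1 : l = i
    · rw [hl1, Emb_ii, Emb_ii, Matrix.transpose_apply]
    · by_cases hl2 : l = j
      · rw [hl2, Emb_ji hij, Emb_ij hij, Matrix.transpose_apply]
      · rw [Emb_out _ hl1 hl2, if_neg hl1, Emb_i_out _ hl1 hl2]
  · by_cases hk2 : k = j
    · rw [hk2]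
      by_cases hl1 : l = i
      · rw [hl1, Emb_ij hij, Emb_ji hij, Matrix.transpose_apply]
      · by_cases hl2 : l = j
        · rw [hl2, Emb_jj hij, Emb_jj hij, Matrix.transpose_apply]
        · rw [Emb_out _ hl1 hl2, if_neg hl2, Emb_j_out hij _ hl1 hl2]
    · by_cases hl1 : l = i
      · rw [hl1, Emb_i_out _ hk1 hk2, Emb_out _ hk1 hk2, if_neg hk1]
      · by_cases hl2 : l = j
        · rw [hl2, Emb_j_out hij _ hk1 hk2, Emb_out _ hk1 hk2, if_neg hk2]
        · rw [Emb_out _ hl1 hl2, Emb_out _ hk1 hk2]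
          by_cases h : k = l
          · rw [if_pos h, if_pos h.symm]
          · rw [if_neg h, if_neg (fun hh => h hh.symm)]

lemma conjT_eq_transpose {m : ℕ} (C : Matrix (Fin m) (Fin m) ℝ) : Cᴴ = Cᵀ := by
  ext a b
  rw [Matrix.conjTranspose_apply, Matrix.transpose_apply, star_trivial]

lemma posDef_fin_two {B : Matrix (Fin 2) (Fin 2) ℝ} (hsym : B 0 1 = B 1 0)
    (h0 : 0 < B 0 0) (hdet : 0 < B 0 0 * B 1 1 - B 0 1 * B 1 0) : B.PosDef := by
  refine Matrix.PosDef.of_dotProduct_mulVec_pos ?_ ?_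
  · rw [Matrix.IsHermitian, conjT_eq_transpose]
    ext a b
    rw [Matrix.transpose_apply]
    fin_cases a <;> fin_cases b <;> simp [hsym]
  · intro x hx
    have key : star x ⬝ᵥ B *ᵥ x =
        B 0 0 * (x 0 * x 0) + 2 * B 0 1 * (x 0 * x 1) + B 1 1 * (x 1 * x 1) := by
      simp only [dotProduct, Matrix.mulVec, Fin.sum_univ_two, Pi.star_apply, star_trivial]
      rw [hsym]; ring
    rw [key]
    have h2 : x 0 ≠ 0 ∨ x 1 ≠ 0 := by
      by_contra h
      push_neg at h
      exact hx (funext fun a => by fin_cases a <;> simp [h.1, h.2])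
    have hdet' : 0 < B 0 0 * B 1 1 - B 0 1 * B 0 1 := by rw [hsym] at hdet ⊢; linarith [hdet]
    rcases eq_or_ne (x 1) 0 with h1 | h1
    · rcases h2 with h | h
      · rw [h1]
        have h3 := mul_self_pos.2 h
        nlinarith
      · exact absurd h1 h
    · nlinarith [sq_nonneg (B 0 0 * x 0 + B 0 1 * x 1), mul_pos hdet' (mul_self_pos.2 h1),
        mul_self_nonneg (x 0), h0]

lemma Emb_posDef (hij : i ≠ j) {B : Matrix (Fin 2) (Fin 2) ℝ} (hB : B.PosDef) :
    (Emb i j B).PosDef := by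
  have hBt : Bᵀ = B := by rw [← conjT_eq_transpose, hB.1]
  refine Matrix.PosDef.of_dotProduct_mulVec_pos ?_ ?_
  · rw [Matrix.IsHermitian, conjT_eq_transpose, Emb_transpose hij, hBt]
  · intro x hx
    have hmv : ∀ k, (Emb i j B *ᵥ x) k =
        if k = i then B 0 0 * x i + B 0 1 * x j
        else if k = j then B 1 0 * x i + B 1 1 * x j
        else x k := by
      intro k
      by_cases hk1 : k = i
      · rw [if_pos hk1, hk1, Matrix.mulVec, dotProduct,
          sum_pair_support hij _ (fun m h1 h2 => by
            rw [Emb_i_out _ h1 h2, zero_mul]), Emb_ii, Emb_ij hij]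
      · by_cases hk2 : k = j
        · rw [if_neg hk1, if_pos hk2, hk2, Matrix.mulVec, dotProduct,
            sum_pair_support hij _ (fun m h1 h2 => by
              rw [Emb_j_out hij _ h1 h2, zero_mul]), Emb_ji hij, Emb_jj hij]
        · rw [if_neg hk1, if_neg hk2, Matrix.mulVec, dotProduct,
            Finset.sum_eq_single_of_mem k (Finset.mem_univ k) (fun m _ hm => by
              rw [Emb_out _ hk1 hk2, if_neg (fun h => hm h.symm), zero_mul]),
            Emb_out _ hk1 hk2, if_pos rfl, one_mul]
    have hji : j ∈ Finset.univ.erase i := Finset.mem_erase.2 ⟨hij.symm, Finset.mem_univ j⟩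
    have tail : ∑ k ∈ (Finset.univ.erase i).erase j, star (x k) * (Emb i j B *ᵥ x) k
        = ∑ k ∈ (Finset.univ.erase i).erase j, x k * x k := by
      apply Finset.sum_congr rfl
      intro k hk
      have hk2 : k ≠ j := (Finset.mem_erase.1 hk).1
      have hk1 : k ≠ i := (Finset.mem_erase.1 (Finset.mem_erase.1 hk).2).1
      rw [star_trivial, hmv, if_neg hk1, if_neg hk2]
    have split : star x ⬝ᵥ (Emb i j B *ᵥ x) =
        (x i * (B 0 0 * x i + B 0 1 * x j) + x j * (B 1 0 * x i + B 1 1 * x j))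
        + ∑ k ∈ (Finset.univ.erase i).erase j, x k * x k := by
      rw [dotProduct, ← Finset.add_sum_erase _ _ (Finset.mem_univ i),
        ← Finset.add_sum_erase _ _ hji]
      simp only [Pi.star_apply]
      rw [tail, star_trivial, star_trivial, hmv i, hmv j,
        if_pos rfl, if_neg hij.symm, if_pos rfl, add_assoc]
    rw [split]
    by_cases hy : (![x i, x j] : Fin 2 → ℝ) = 0
    · have hxi : x i = 0 := congrFun hy 0
      have hxj : x j = 0 := congrFun hy 1
      obtain ⟨k0, hk0⟩ := Function.ne_iff.1 hx
      have hk0i : k0 ≠ i := fun h => hk0 (h ▸ hxi)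
      have hk0j : k0 ≠ j := fun h => hk0 (h ▸ hxj)
      have hmem : k0 ∈ (Finset.univ.erase i).erase j :=
        Finset.mem_erase.2 ⟨hk0j, Finset.mem_erase.2 ⟨hk0i, Finset.mem_univ k0⟩⟩
      have hpos : 0 < ∑ k ∈ (Finset.univ.erase i).erase j, x k * x k :=
        Finset.sum_pos' (fun k _ => mul_self_nonneg (x k)) ⟨k0, hmem, mul_self_pos.2 hk0⟩
      rw [hxi, hxj]
      simpa using hpos
    · have hq := hB.dotProduct_mulVec_pos hy
      have e : star (![x i, x j] : Fin 2 → ℝ) ⬝ᵥ B *ᵥ ![x i, x j] =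
          x i * (B 0 0 * x i + B 0 1 * x j) + x j * (B 1 0 * x i + B 1 1 * x j) := by
        simp only [dotProduct, Matrix.mulVec, Fin.sum_univ_two, Pi.star_apply, star_trivial,
          Matrix.cons_val_zero, Matrix.cons_val_one, Matrix.head_cons]
      rw [e] at hq
      have hnn : 0 ≤ ∑ k ∈ (Finset.univ.erase i).erase j, x k * x k :=
        Finset.sum_nonneg (fun k _ => mul_self_nonneg (x k))
      linarith

end Stmt15

variable {n : ℕ}

lemma pair_constraint {i j : Fin n} (hij : i ≠ j) {A : Matrix (Fin n) (Fin n) ℝ}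
    (hA : A.PosDef)
    (key2 : ∀ Z X : Matrix (Fin n) (Fin n) ℝ, Z.PosDef → X.PosDef →
      msqrt (Z * X * Z) * A * msqrt (Z * X * Z) = Z * msqrt X * A * (msqrt X * Z)) :
    A i j = 0 ∧ A i i = A j j := by
  have hr0 : (0:ℝ) < Real.sqrt (17/2) := Real.sqrt_pos.2 (by norm_num)
  set r : ℝ := Real.sqrt (17/2) with hrdef
  have hr2 : r * r = 17/2 := Real.mul_self_sqrt (by norm_num)
  have hrne : r ≠ 0 := ne_of_gt hr0
  have hri : 0 < r⁻¹ := inv_pos.2 hr0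
  set Z2 : Matrix (Fin 2) (Fin 2) ℝ := !![2, 2; 2, 5/2] with hZ2
  set X2 : Matrix (Fin 2) (Fin 2) ℝ := !![5, -3; -3, 2] with hX2
  set S2 : Matrix (Fin 2) (Fin 2) ℝ := !![2, -1; -1, 1] with hS2
  set M2 : Matrix (Fin 2) (Fin 2) ℝ := !![2, 0; 3/2, 1/2] with hM2
  set M2t : Matrix (Fin 2) (Fin 2) ℝ := !![2, 3/2; 0, 1/2] with hM2t
  set N2 : Matrix (Fin 2) (Fin 2) ℝ := !![4, 3; 3, 5/2] with hN2
  set T2 : Matrix (Fin 2) (Fin 2) ℝ := r⁻¹ • !![5, 3; 3, 7/2] with hT2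
  have hSS : S2 * S2 = X2 := by
    rw [hS2, hX2, Matrix.mul_fin_two]; norm_num
  have hZXZ2 : Z2 * X2 * Z2 = N2 := by
    rw [hZ2, hX2, hN2, Matrix.mul_fin_two, Matrix.mul_fin_two]; norm_num
  have hZS : Z2 * S2 = M2 := by
    rw [hZ2, hS2, hM2, Matrix.mul_fin_two]; norm_num
  have hSZ : S2 * Z2 = M2t := by
    rw [hS2, hZ2, hM2t, Matrix.mul_fin_two]; norm_num
  have hTT : T2 * T2 = N2 := by
    rw [hT2, hN2]
    have h1 : (!![5, 3; 3, 7/2] : Matrix (Fin 2) (Fin 2) ℝ) * !![5, 3; 3, 7/2]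
        = (17/2 : ℝ) • !![4, 3; 3, 5/2] := by
      rw [Matrix.mul_fin_two]
      ext a b
      fin_cases a <;> fin_cases b <;> norm_num [Matrix.smul_apply]
    rw [smul_mul_assoc, mul_smul_comm, h1, smul_smul, smul_smul]
    have h2 : r⁻¹ * r⁻¹ * (17/2) = 1 := by
      field_simp
      linarith [hr2]
    rw [h2, one_smul]
  have hZ2pd : Z2.PosDef := by
    apply Stmt15.posDef_fin_two <;> rw [hZ2] <;> norm_num
  have hX2pd : X2.PosDef := by
    apply Stmt15.posDef_fin_two <;> rw [hX2] <;> norm_num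
  have hS2pd : S2.PosDef := by
    apply Stmt15.posDef_fin_two <;> rw [hS2] <;> norm_num
  have et00 : T2 0 0 = 5/r := by rw [hT2]; simp [Matrix.smul_apply]; ring
  have et01 : T2 0 1 = 3/r := by rw [hT2]; simp [Matrix.smul_apply]; ring
  have et10 : T2 1 0 = 3/r := by rw [hT2]; simp [Matrix.smul_apply]; ring
  have et11 : T2 1 1 = 7/(2*r) := by
    rw [hT2]; simp [Matrix.smul_apply]; field_simp
  have hT2pd : T2.PosDef := by
    apply Stmt15.posDef_fin_two
    · rw [et01, et10]
    · rw [et00]; positivity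
    · rw [et00, et01, et10, et11]
      have he : 5/r * (7/(2*r)) - 3/r * (3/r) = 17/(r*r*2) := by field_simp; ring
      rw [he]
      positivity
  -- lift to n × n
  have hmsX : msqrt (Stmt15.Emb i j X2) = Stmt15.Emb i j S2 :=
    Stmt15.msqrt_unique (Stmt15.Emb_posDef hij hS2pd).posSemidef
      (by rw [Stmt15.Emb_mul hij, hSS])
  have hZXZ : Stmt15.Emb i j Z2 * Stmt15.Emb i j X2 * Stmt15.Emb i j Z2
      = Stmt15.Emb i j N2 := by
    rw [Stmt15.Emb_mul hij, Stmt15.Emb_mul hij, hZXZ2]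
  have hmsN : msqrt (Stmt15.Emb i j Z2 * Stmt15.Emb i j X2 * Stmt15.Emb i j Z2)
      = Stmt15.Emb i j T2 := by
    rw [hZXZ]
    exact Stmt15.msqrt_unique (Stmt15.Emb_posDef hij hT2pd).posSemidef
      (by rw [Stmt15.Emb_mul hij, hTT])
  have H := key2 (Stmt15.Emb i j Z2) (Stmt15.Emb i j X2)
    (Stmt15.Emb_posDef hij hZ2pd) (Stmt15.Emb_posDef hij hX2pd)
  rw [hmsN, hmsX, Stmt15.Emb_mul hij, hZS] at H
  rw [show Stmt15.Emb i j S2 * Stmt15.Emb i j Z2 = Stmt15.Emb i j M2t from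
    by rw [Stmt15.Emb_mul hij, hSZ]] at H
  -- H : Emb T2 * A * Emb T2 = Emb M2 * A * Emb M2t
  have hsymA : A j i = A i j := by
    have h := hA.1
    calc A j i = Aᴴ j i := by rw [h]
      _ = A i j := by rw [Matrix.conjTranspose_apply, star_trivial]
  have Hii := congrFun (congrFun H i) i
  have Hij := congrFun (congrFun H i) j
  simp only [Matrix.mul_assoc, Stmt15.Emb_mul_left hij, Stmt15.Emb_mul_right hij] at Hii
  simp only [Matrix.mul_assoc, Stmt15.Emb_mul_left hij, Stmt15.Emb_mul_right' hij] at Hij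
  simp only [et00, et01, et10, et11, hsymA, hM2, hM2t] at Hii Hij
  norm_num at Hii Hij
  have E1 : 25*(A i i) + 30*(A i j) + 9*(A j j) = 34*(A i i) := by
    have h := Hii
    field_simp at h
    linear_combination h + 4*(A i i)*hr2
  have E2 : 2*(15*(A i i) + (53/2)*(A i j) + (21/2)*(A j j)) = 17*(3*(A i i) + A i j) := by
    have h := Hij
    field_simp at h
    linear_combination h + (6*(A i i)+2*(A i j))*hr2
  constructor <;> linarith

/-- If `α : Sym⁺(n) → Sym⁺(n)` satisfies `X⁻¹ # Y = α(X)⁻¹ # α(Y)` for all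
`X, Y ∈ Sym⁺(n)`, where `#` is the matrix geometric mean, then `α` is a positive
scalar multiple of the identity: `α(X) = λ X` for some `λ > 0`. -/
theorem statement15 (n : ℕ)
    (α : Matrix (Fin n) (Fin n) ℝ → Matrix (Fin n) (Fin n) ℝ)
    (hmap : ∀ X, X.PosDef → (α X).PosDef)
    (hα : ∀ X Y, X.PosDef → Y.PosDef → gmean X⁻¹ Y = gmean (α X)⁻¹ (α Y)) :
    ∃ lam : ℝ, 0 < lam ∧ ∀ X, X.PosDef → α X = lam • X := by
  rcases Nat.eq_zero_or_pos n with h0 | hpos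
  · refine ⟨1, one_pos, fun X _ => ?_⟩
    subst h0
    ext k l
    exact k.elim0
  -- key consequences
  have key : ∀ X Y : Matrix (Fin n) (Fin n) ℝ, X.PosDef → Y.PosDef →
      gmean X⁻¹ Y * α X * gmean X⁻¹ Y = α Y := by
    intro X Y hX hY
    have h2 := Stmt15.gmean_riccati (hmap X hX) (hmap Y hY)
    rw [← hα X Y hX hY] at h2
    exact h2.2
  set A := α 1 with hAdef
  have hA : A.PosDef := hmap 1 Matrix.PosDef.one
  have key1 : ∀ Y, Y.PosDef → α Y = msqrt Y * A * msqrt Y := by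
    intro Y hY
    have h := key 1 Y Matrix.PosDef.one hY
    have hg1 : gmean (1 : Matrix (Fin n) (Fin n) ℝ)⁻¹ Y = msqrt Y := by
      simp [gmean, Stmt15.msqrt_one]
    rw [hg1] at h
    exact h.symm
  have key2 : ∀ Z X : Matrix (Fin n) (Fin n) ℝ, Z.PosDef → X.PosDef →
      msqrt (Z * X * Z) * A * msqrt (Z * X * Z) = Z * msqrt X * A * (msqrt X * Z) := by
    intro Z X hZ hX
    have hZXZpd : (Z * X * Z).PosDef := Stmt15.posDef_mul_mul hX hZ
    have hgm := Stmt15.gmean_riccati hX hZXZpd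
    have hguniq : gmean X⁻¹ (Z * X * Z) = Z :=
      Stmt15.riccati_unique hX hgm.1 hZ hgm.2
    have hk := key X (Z * X * Z) hX hZXZpd
    rw [hguniq, key1 X hX, key1 (Z * X * Z) hZXZpd] at hk
    simp only [Matrix.mul_assoc] at hk ⊢
    exact hk.symm
  -- A is a positive multiple of the identity
  have pair : ∀ i j : Fin n, i ≠ j → A i j = 0 ∧ A i i = A j j := by
    intro i j hij
    exact pair_constraint hij hA key2
  set i0 : Fin n := ⟨0, hpos⟩ with hi0
  have hlam : 0 < A i0 i0 := by
    have hx : (Pi.single i0 1 : Fin n → ℝ) ≠ 0 := by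
      intro h
      have := congrFun h i0
      simp [Pi.single_apply] at this
    have h := hA.dotProduct_mulVec_pos hx
    have e : star (Pi.single i0 1 : Fin n → ℝ) ⬝ᵥ A *ᵥ Pi.single i0 1 = A i0 i0 := by
      simp [dotProduct, Matrix.mulVec, Pi.single_apply, Finset.sum_ite_eq,
        Finset.mem_univ, mul_comm]
    rw [e] at h
    exact h
  have hAs : A = A i0 i0 • (1 : Matrix (Fin n) (Fin n) ℝ) := by
    ext k l
    rw [Matrix.smul_apply, Matrix.one_apply, smul_eq_mul]
    by_cases hkl : k = l
    · rw [if_pos hkl, mul_one, hkl]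
      by_cases hk : l = i0
      · rw [hk]
      · exact (pair l i0 hk).2
    · rw [if_neg hkl, mul_zero]
      exact (pair k l hkl).1
  refine ⟨A i0 i0, hlam, fun X hX => ?_⟩
  rw [key1 X hX]
  conv_lhs => rw [hAs]
  rw [mul_smul_comm, Matrix.mul_one, smul_mul_assoc,
    Stmt15.msqrt_mul_self hX.posSemidef]
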